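/- Consider the simple regression model y = xβ₀ + e with x and e independent real random variables, E[e] = 0, E[x²] > 0, finite second moments, λ ≥ 0; let H₀ be the distribution of (x, y). Define the lasso functional L(H) = sign(E_H[xy])·max(|E_H[xy]|/E_H[x²] − λ/E_H[x²], 0), fix (x₀, y₀) and let H_ε = (1 − ε)H₀ + ε·δ_{(x₀,y₀)}. Then: (i) if |β₀| < λ/E_{H₀}[x²], the map ε ↦ L(H_ε) is constantly 0 in a right-neighborhood of 0, so its derivative at 0 equals 0; (ii) if |β₀| > λ/E_{H₀}[x²], the map ε ↦ L(H_ε) is differentiable at 0 with derivative x₀(y₀ − β₀x₀)/E_{H₀}[x²] − λ·(E_{H₀}[x²] − x₀²)/(E_{H₀}[x²])²·sign(β₀). -/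

import Mathlib

open MeasureTheory ProbabilityTheory Filter

/-- Lemma 2 of the paper: influence function of the lasso functional
in simple regression. With `L(H) = sign(E_H[xy])·max(|E_H[xy]|/E_H[x²] - λ/E_H[x²], 0)`
and `H_ε = (1-ε)H₀ + ε·δ_{(x₀,y₀)}`: (i) if `|β₀| < λ/E_{H₀}[x²]` then `ε ↦ L(H_ε)` is
constantly `0` in a right-neighborhood of `0` and its derivative at `0` is `0`;
(ii) if `|β₀| > λ/E_{H₀}[x²]` then it is differentiable at `0` with derivative
`x₀(y₀ - β₀x₀)/E[x²] - λ(E[x²] - x₀²)/E[x²]²·sign(β₀)`. -/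
theorem influence_function_lasso_simple
    {Ω : Type*} [MeasurableSpace Ω] (μ : Measure Ω) [IsProbabilityMeasure μ]
    (x e : Ω → ℝ) (hxm : Measurable x) (hem : Measurable e)
    (hind : IndepFun x e μ)
    (hx1 : Integrable x μ) (he1 : Integrable e μ)
    (hx2 : Integrable (fun ω => (x ω) ^ 2) μ)
    (he2 : Integrable (fun ω => (e ω) ^ 2) μ)
    (hxe : Integrable (fun ω => x ω * e ω) μ)
    (hmean : ∫ ω, e ω ∂μ = 0)
    (Ex : ℝ) (hEx : Ex = ∫ ω, (x ω) ^ 2 ∂μ) (hExpos : 0 < Ex)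
    (lam : ℝ) (hlam : 0 ≤ lam)
    (β₀ : ℝ)
    (H₀ : Measure (ℝ × ℝ)) (hH₀ : H₀ = μ.map (fun ω => (x ω, x ω * β₀ + e ω)))
    (x₀ y₀ : ℝ)
    (Hmix : ℝ → Measure (ℝ × ℝ))
    (hHmix : ∀ ε : ℝ,
      Hmix ε = ENNReal.ofReal (1 - ε) • H₀ + ENNReal.ofReal ε • Measure.dirac (x₀, y₀))
    (L : Measure (ℝ × ℝ) → ℝ)
    (hL : ∀ ν : Measure (ℝ × ℝ),
      L ν = Real.sign (∫ z, z.1 * z.2 ∂ν) *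
        max (|∫ z, z.1 * z.2 ∂ν| / (∫ z, z.1 ^ 2 ∂ν) - lam / (∫ z, z.1 ^ 2 ∂ν)) 0) :
    (|β₀| < lam / Ex →
      (∀ᶠ ε in nhdsWithin (0 : ℝ) (Set.Ici 0), L (Hmix ε) = 0) ∧
        HasDerivWithinAt (fun ε : ℝ => L (Hmix ε)) 0 (Set.Ici 0) 0) ∧
    (lam / Ex < |β₀| →
      HasDerivWithinAt (fun ε : ℝ => L (Hmix ε))
        (x₀ * (y₀ - β₀ * x₀) / Ex - lam * (Ex - x₀ ^ 2) / Ex ^ 2 * Real.sign β₀)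
        (Set.Ici 0) 0) := by
  -- basic facts
  have hmf : Measurable (fun ω => (x ω, x ω * β₀ + e ω)) :=
    hxm.prodMk ((hxm.mul_const β₀).add hem)
  have hExne : Ex ≠ 0 := ne_of_gt hExpos
  have hIxe : ∫ ω, x ω * e ω ∂μ = 0 := by
    have h := hind.integral_mul_eq_mul_integral hx1.1 he1.1
    simpa [Pi.mul_apply, hmean] using h
  -- integrals under H₀
  have hcomp : (fun z : ℝ × ℝ => z.1 * z.2) ∘ (fun ω => (x ω, x ω * β₀ + e ω))
      = fun ω => β₀ * (x ω) ^ 2 + x ω * e ω := by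
    funext ω; simp [Function.comp]; ring
  have hint1H : Integrable (fun z : ℝ × ℝ => z.1 * z.2) H₀ := by
    rw [hH₀, integrable_map_measure
      (measurable_fst.fun_mul measurable_snd).aestronglyMeasurable hmf.aemeasurable, hcomp]
    exact (hx2.const_mul β₀).add hxe
  have hint2H : Integrable (fun z : ℝ × ℝ => z.1 ^ 2) H₀ := by
    rw [hH₀, integrable_map_measure
      (measurable_fst.pow_const 2).aestronglyMeasurable hmf.aemeasurable]
    exact hx2
  have hI1 : ∫ z : ℝ × ℝ, z.1 * z.2 ∂H₀ = β₀ * Ex := by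
    rw [hH₀, integral_map hmf.aemeasurable
      (measurable_fst.fun_mul measurable_snd).aestronglyMeasurable]
    calc ∫ ω, (x ω, x ω * β₀ + e ω).1 * (x ω, x ω * β₀ + e ω).2 ∂μ
        = ∫ ω, (β₀ * (x ω) ^ 2 + x ω * e ω) ∂μ := by
          refine integral_congr_ae (Filter.Eventually.of_forall fun ω => ?_)
          show x ω * (x ω * β₀ + e ω) = β₀ * (x ω) ^ 2 + x ω * e ω
          ring
      _ = β₀ * ∫ ω, (x ω) ^ 2 ∂μ + ∫ ω, x ω * e ω ∂μ := by
          rw [integral_add (hx2.const_mul β₀) hxe, integral_const_mul]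
      _ = β₀ * Ex := by rw [hIxe, hEx]; ring
  have hI2 : ∫ z : ℝ × ℝ, z.1 ^ 2 ∂H₀ = Ex := by
    rw [hH₀, integral_map hmf.aemeasurable
      (measurable_fst.pow_const 2).aestronglyMeasurable, hEx]
  -- integrals under the mixture
  have key : ∀ (g : ℝ × ℝ → ℝ), Measurable g → Integrable g H₀ →
      ∀ ε : ℝ, 0 ≤ ε → ε ≤ 1 →
      ∫ z, g z ∂(Hmix ε) = (1 - ε) * (∫ z, g z ∂H₀) + ε * g (x₀, y₀) := by
    intro g hg hgi ε h0 h1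
    have hd : Integrable g (Measure.dirac (x₀, y₀)) := by
      refine ⟨hg.aestronglyMeasurable, ?_⟩
      simp [HasFiniteIntegral, lintegral_dirac]
    rw [hHmix, integral_add_measure (hgi.smul_measure ENNReal.ofReal_ne_top)
        (hd.smul_measure ENNReal.ofReal_ne_top),
      integral_smul_measure, integral_smul_measure, integral_dirac,
      ENNReal.toReal_ofReal (by linarith), ENNReal.toReal_ofReal h0]
    simp [smul_eq_mul]
  have hA : ∀ ε : ℝ, 0 ≤ ε → ε ≤ 1 →
      ∫ z, z.1 * z.2 ∂(Hmix ε) = (1 - ε) * (β₀ * Ex) + ε * (x₀ * y₀) := by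
    intro ε h0 h1
    rw [key _ (measurable_fst.fun_mul measurable_snd) hint1H ε h0 h1, hI1]
  have hB : ∀ ε : ℝ, 0 ≤ ε → ε ≤ 1 →
      ∫ z, z.1 ^ 2 ∂(Hmix ε) = (1 - ε) * Ex + ε * x₀ ^ 2 := by
    intro ε h0 h1
    rw [key _ (measurable_fst.pow_const 2) hint2H ε h0 h1, hI2]
  have hBpos : ∀ ε : ℝ, 0 ≤ ε → ε < 1 → 0 < (1 - ε) * Ex + ε * x₀ ^ 2 := by
    intro ε h0 h1
    have : 0 < (1 - ε) * Ex := mul_pos (by linarith) hExpos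
    nlinarith [sq_nonneg x₀, mul_nonneg h0 (sq_nonneg x₀)]
  set M : ℝ := |x₀ * y₀ - β₀ * Ex| with hM
  have hMnn : 0 ≤ M := abs_nonneg _
  constructor
  · -- case (i)
    intro hlt
    have hc : |β₀| * Ex < lam := by
      rwa [lt_div_iff₀ hExpos] at hlt
    set δ : ℝ := min 1 ((lam - |β₀| * Ex) / (M + 1)) with hδ
    have hδpos : 0 < δ :=
      lt_min one_pos (div_pos (by linarith) (by linarith))
    have hev : ∀ᶠ ε in nhdsWithin (0 : ℝ) (Set.Ici 0), L (Hmix ε) = 0 := by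
      filter_upwards [Ico_mem_nhdsGE hδpos] with ε hε
      obtain ⟨h0, hεδ⟩ := hε
      have h1 : ε < 1 := lt_of_lt_of_le hεδ (min_le_left _ _)
      have hεM : ε * (M + 1) < lam - |β₀| * Ex := by
        have := lt_of_lt_of_le hεδ (min_le_right _ _)
        rw [lt_div_iff₀ (by linarith : (0:ℝ) < M + 1)] at this
        exact this
      have hAabs : |(1 - ε) * (β₀ * Ex) + ε * (x₀ * y₀)| < lam := by
        have heq : (1 - ε) * (β₀ * Ex) + ε * (x₀ * y₀)
            = β₀ * Ex + ε * (x₀ * y₀ - β₀ * Ex) := by ring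
        rw [heq]
        calc |β₀ * Ex + ε * (x₀ * y₀ - β₀ * Ex)|
            ≤ |β₀ * Ex| + |ε * (x₀ * y₀ - β₀ * Ex)| := abs_add_le _ _
          _ = |β₀| * Ex + ε * M := by
              rw [abs_mul, abs_mul, abs_of_nonneg h0,
                abs_of_pos hExpos]
          _ < lam := by nlinarith
      have hBp := hBpos ε h0 h1
      rw [hL, hA ε h0 h1.le, hB ε h0 h1.le]
      have hmax : max (|(1 - ε) * (β₀ * Ex) + ε * (x₀ * y₀)| / ((1 - ε) * Ex + ε * x₀ ^ 2)
          - lam / ((1 - ε) * Ex + ε * x₀ ^ 2)) 0 = 0 := by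
        apply max_eq_right
        rw [div_sub_div_same]
        apply div_nonpos_of_nonpos_of_nonneg (by linarith) hBp.le
      rw [hmax, mul_zero]
    refine ⟨hev, ?_⟩
    have h0 : L (Hmix 0) = 0 := hev.self_of_nhdsWithin (Set.self_mem_Ici)
    exact (hasDerivWithinAt_const (0:ℝ) (Set.Ici 0) (0:ℝ)).congr_of_eventuallyEq hev h0
  · -- case (ii)
    intro hgt
    have hc : lam < |β₀| * Ex := by
      rwa [div_lt_iff₀ hExpos] at hgt
    have hβne : β₀ ≠ 0 := by
      intro h; rw [h] at hc; simp at hc; linarith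
    set s : ℝ := Real.sign β₀ with hsdef
    set δ : ℝ := min 1 ((|β₀| * Ex - lam) / (M + 1)) with hδ
    have hδpos : 0 < δ :=
      lt_min one_pos (div_pos (by linarith) (by linarith))
    -- eventual formula
    have hev : ∀ᶠ ε in nhdsWithin (0 : ℝ) (Set.Ici 0),
        L (Hmix ε) = ((1 - ε) * (β₀ * Ex) + ε * (x₀ * y₀) - s * lam)
          / ((1 - ε) * Ex + ε * x₀ ^ 2) := by
      filter_upwards [Ico_mem_nhdsGE hδpos] with ε hε
      obtain ⟨h0, hεδ⟩ := hε
      have h1 : ε < 1 := lt_of_lt_of_le hεδ (min_le_left _ _)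
      have hεM : ε * (M + 1) < |β₀| * Ex - lam := by
        have := lt_of_lt_of_le hεδ (min_le_right _ _)
        rw [lt_div_iff₀ (by linarith : (0:ℝ) < M + 1)] at this
        exact this
      have hεM' : ε * M < |β₀| * Ex - lam := by nlinarith
      set A : ℝ := (1 - ε) * (β₀ * Ex) + ε * (x₀ * y₀) with hAdef
      have hAnear : |A - β₀ * Ex| ≤ ε * M := by
        have heq : A - β₀ * Ex = ε * (x₀ * y₀ - β₀ * Ex) := by rw [hAdef]; ring
        rw [heq, abs_mul, abs_of_nonneg h0]
      have hBp := hBpos ε h0 h1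
      rw [hL, hA ε h0 h1.le, hB ε h0 h1.le, ← hAdef]
      rcases lt_or_gt_of_ne hβne with hneg | hpos
      · -- β₀ < 0
        have hs1 : s = -1 := Real.sign_of_neg hneg
        have hAlt : A < -lam := by
          have h1' : β₀ * Ex < 0 := mul_neg_of_neg_of_pos hneg hExpos
          have h2' : |β₀ * Ex| = |β₀| * Ex := by
            rw [abs_mul, abs_of_pos hExpos]
          have := abs_le.1 hAnear
          have h3' : β₀ * Ex = -( |β₀| * Ex ) := by
            rw [← h2', abs_of_neg h1']; ring
          linarith [this.2]
        have hAneg : A < 0 := by linarith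
        have hsgnA : Real.sign A = -1 := Real.sign_of_neg hAneg
        have habsA : |A| = -A := abs_of_neg hAneg
        rw [hsgnA, habsA, hs1]
        have hpos' : 0 < (-A - lam) / ((1 - ε) * Ex + ε * x₀ ^ 2) :=
          div_pos (by linarith) hBp
        rw [div_sub_div_same, max_eq_left hpos'.le]
        field_simp
        ring
      · -- β₀ > 0
        have hs1 : s = 1 := Real.sign_of_pos hpos
        have hAgt : lam < A := by
          have h1' : 0 < β₀ * Ex := mul_pos hpos hExpos
          have h2' : β₀ * Ex = |β₀| * Ex := by
            rw [abs_of_pos hpos]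
          have := abs_le.1 hAnear
          linarith [this.1]
        have hApos : 0 < A := by linarith
        have hsgnA : Real.sign A = 1 := Real.sign_of_pos hApos
        have habsA : |A| = A := abs_of_pos hApos
        rw [hsgnA, habsA, hs1]
        have hpos' : 0 < (A - lam) / ((1 - ε) * Ex + ε * x₀ ^ 2) :=
          div_pos (by linarith) hBp
        rw [div_sub_div_same, max_eq_left hpos'.le]
        ring
    -- the smooth function and its derivative
    have hN : HasDerivAt (fun ε : ℝ => (1 - ε) * (β₀ * Ex) + ε * (x₀ * y₀) - s * lam)
        (x₀ * y₀ - β₀ * Ex) 0 := by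
      have h := ((((hasDerivAt_id (0:ℝ)).const_sub 1).mul_const (β₀ * Ex)).add
        ((hasDerivAt_id (0:ℝ)).mul_const (x₀ * y₀))).sub_const (s * lam)
      exact (h.congr_deriv (by ring)).congr_of_eventuallyEq
        (Filter.Eventually.of_forall fun ε => by simp only [Pi.add_apply, id])
    have hD : HasDerivAt (fun ε : ℝ => (1 - ε) * Ex + ε * x₀ ^ 2)
        (x₀ ^ 2 - Ex) 0 := by
      have h := (((hasDerivAt_id (0:ℝ)).const_sub 1).mul_const Ex).add
        ((hasDerivAt_id (0:ℝ)).mul_const (x₀ ^ 2))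
      exact (h.congr_deriv (by ring)).congr_of_eventuallyEq
        (Filter.Eventually.of_forall fun ε => by simp only [Pi.add_apply, id])
    have hD0 : (1 - (0:ℝ)) * Ex + 0 * x₀ ^ 2 ≠ 0 := by
      simpa using hExne
    have hg := hN.div hD hD0
    have hg' : HasDerivAt (fun ε : ℝ =>
        ((1 - ε) * (β₀ * Ex) + ε * (x₀ * y₀) - s * lam) / ((1 - ε) * Ex + ε * x₀ ^ 2))
        (x₀ * (y₀ - β₀ * x₀) / Ex - lam * (Ex - x₀ ^ 2) / Ex ^ 2 * s) 0 := by
      refine (hg.congr_deriv ?_).congr_of_eventuallyEq (Filter.Eventually.of_forall fun ε => rfl)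
      simp only [one_mul, zero_mul, mul_zero, sub_zero, add_zero, mul_one]
      field_simp
      ring
    have h00 : L (Hmix 0) = ((1 - (0:ℝ)) * (β₀ * Ex) + 0 * (x₀ * y₀) - s * lam)
        / ((1 - (0:ℝ)) * Ex + 0 * x₀ ^ 2) :=
      hev.self_of_nhdsWithin (Set.self_mem_Ici)
    exact (hg'.hasDerivWithinAt).congr_of_eventuallyEq hev h00
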